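/- Let Y be an integral separated F-scheme of finite type, O a valuation ring of F(Y)/F with residue field K and center y ∈ Y, and assume the natural map κ(y) → K is an isomorphism. Then for any dominant-into-y rational map f : X ⇢ Y with X integral sending η_X to y, there exists a unique place v : F(Y) ⇝ F(X) with valuation ring O that is compatible with f. -/

import Mathlib

open AlgebraicGeometry CategoryTheory

/-- A place from `K` to `L`, given by its valuation ring `O ⊆ K` and a ring homomorphism
`ρ : O → L` whose kernel is the maximal ideal (so `ρ` is the residue map followed by an
embedding of the residue field into `L`). -/
structure PlaceData (K L : Type*) [Field K] [Field L] where
  O : ValuationSubring K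
  ρ : O →+* L
  ker_eq : RingHom.ker ρ = IsLocalRing.maximalIdeal O

/-- A morphism `f : X ⟶ Y` of integral schemes is *compatible* with a place
`p : F(Y) ⇝ F(X)` if the valuation ring of `p` has centre `y = f(η_X)` on `Y` (it contains
the image of the local ring `O_{Y,y}` in `F(Y)`) and the composite
`O_{Y,y} → O_p → F(X)` coincides with the map induced by `f` on generic stalks. -/
def Compatible {X Y : Scheme} [IsIntegral X] [IsIntegral Y]
    (f : X ⟶ Y) (p : PlaceData Y.functionField X.functionField) : Prop :=
  ∃ hc : ∀ a : Y.presheaf.stalk (f.base (genericPoint X)),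
      Y.presheaf.stalkSpecializes (genericPoint_specializes _) a ∈ p.O,
    ∀ a : Y.presheaf.stalk (f.base (genericPoint X)),
      p.ρ ⟨Y.presheaf.stalkSpecializes (genericPoint_specializes _) a, hc a⟩ =
        f.stalkMap (genericPoint X) a

theorem placedata_ext {K L : Type*} [Field K] [Field L] {p q : PlaceData K L}
    (h : p.O = q.O)
    (h2 : ∀ x (hp : x ∈ p.O) (hq : x ∈ q.O), p.ρ ⟨x, hp⟩ = q.ρ ⟨x, hq⟩) : p = q := by
  obtain ⟨O1, ρ1, k1⟩ := p
  obtain ⟨O2, ρ2, k2⟩ := q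
  dsimp at h
  subst h
  simp only [PlaceData.mk.injEq, heq_eq_eq, true_and]
  ext x
  exact h2 x x.2 x.2

/-- Let `Y` be an integral separated `F`-scheme of finite type, `O` a valuation ring of
`F(Y)/F` with centre `y ∈ Y` (i.e. dominating `O_{Y,y}`) such that the natural map
`κ(y) → κ(O)` is an isomorphism (the induced map from the stalk at `y` to the residue field
of `O` is surjective with kernel the maximal ideal). Then for any morphism `f : X ⟶ Y` with
`X` integral sending the generic point `η_X` to `y`, there is a unique place
`v : F(Y) ⇝ F(X)` with valuation ring `O` compatible with `f`. -/
theorem stmt_12 {F : Type} [Field F] {Y : Scheme} [IsIntegral Y]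
    (pY : Y ⟶ Spec (CommRingCat.of F))
    [LocallyOfFiniteType pY] [QuasiCompact pY] [AlgebraicGeometry.IsSeparated pY]
    (O : ValuationSubring Y.functionField) (y : Y)
    (hF : ∀ c : (Spec (CommRingCat.of F)).presheaf.stalk (pY.base (genericPoint Y)),
      pY.stalkMap (genericPoint Y) c ∈ O)
    (hc : ∀ a : Y.presheaf.stalk y,
      Y.presheaf.stalkSpecializes (genericPoint_specializes y) a ∈ O)
    (hsurj : Function.Surjective (fun a : Y.presheaf.stalk y =>
      IsLocalRing.residue O ⟨Y.presheaf.stalkSpecializes (genericPoint_specializes y) a, hc a⟩))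
    (hker : ∀ a : Y.presheaf.stalk y,
      IsLocalRing.residue O ⟨Y.presheaf.stalkSpecializes (genericPoint_specializes y) a, hc a⟩ = 0
        ↔ a ∈ IsLocalRing.maximalIdeal (Y.presheaf.stalk y))
    {X : Scheme} [IsIntegral X] (f : X ⟶ Y)
    (hy : f.base (genericPoint X) = y) :
    ∃! v : PlaceData Y.functionField X.functionField, v.O = O ∧ Compatible f v := by
  classical
  subst hy
  let g : Y.presheaf.stalk (f.base (genericPoint X)) →+* X.functionField :=
    (f.stalkMap (genericPoint X)).hom
  let sp : Y.presheaf.stalk (f.base (genericPoint X)) →+* Y.functionField :=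
    (Y.presheaf.stalkSpecializes (genericPoint_specializes _)).hom
  let φ : Y.presheaf.stalk (f.base (genericPoint X)) →+* IsLocalRing.ResidueField O :=
    (IsLocalRing.residue (↥O)).comp (sp.codRestrict O hc)
  have hφsurj : Function.Surjective φ := hsurj
  haveI : IsLocalHom g := inferInstanceAs (IsLocalHom (f.stalkMap (genericPoint X)).hom)
  have hkerg : RingHom.ker g = IsLocalRing.maximalIdeal _ := by
    ext a
    rw [RingHom.mem_ker, IsLocalRing.mem_maximalIdeal, mem_nonunits_iff,
      ← isUnit_map_iff g a, isUnit_iff_ne_zero, not_ne_iff]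
  have hkerφ : RingHom.ker φ = IsLocalRing.maximalIdeal _ := by
    ext a
    rw [RingHom.mem_ker]
    exact hker a
  have hle : RingHom.ker φ ≤ RingHom.ker g := by rw [hkerφ, hkerg]
  let ψ : IsLocalRing.ResidueField (↥O) →+* X.functionField :=
    φ.liftOfRightInverse (Function.surjInv hφsurj) (Function.rightInverse_surjInv hφsurj)
      ⟨g, hle⟩
  have hψφ : ∀ a, ψ (φ a) = g a := fun a =>
    φ.liftOfRightInverse_comp_apply _ _ ⟨g, hle⟩ a
  have hψinj : Function.Injective ψ := ψ.injective
  let ρ : ↥O →+* X.functionField := ψ.comp (IsLocalRing.residue (↥O))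
  have hρker : RingHom.ker ρ = IsLocalRing.maximalIdeal (↥O) := by
    ext o
    rw [RingHom.mem_ker]
    constructor
    · intro h
      have h0 : IsLocalRing.residue (↥O) o = 0 :=
        hψinj (show ψ (IsLocalRing.residue (↥O) o) = ψ 0 by rw [map_zero]; exact h)
      exact Ideal.Quotient.eq_zero_iff_mem.mp h0
    · intro h
      have h0 : IsLocalRing.residue (↥O) o = 0 := Ideal.Quotient.eq_zero_iff_mem.mpr h
      show ψ (IsLocalRing.residue (↥O) o) = 0
      rw [h0, map_zero]
  have hcomp : ∀ a, ρ ⟨sp a, hc a⟩ = g a := fun a => hψφ a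
  have key : ∀ (ρ' : ↥O →+* X.functionField),
      RingHom.ker ρ' = IsLocalRing.maximalIdeal (↥O) →
      (∀ a, ρ' ⟨sp a, hc a⟩ = g a) →
      ∀ (x : Y.functionField) (hx : x ∈ O) (a : Y.presheaf.stalk (f.base (genericPoint X))),
        φ a = IsLocalRing.residue (↥O) ⟨x, hx⟩ → ρ' ⟨x, hx⟩ = g a := by
    intro ρ' hk hcm x hx a ha
    have hmem : (⟨sp a, hc a⟩ - ⟨x, hx⟩ : ↥O) ∈ IsLocalRing.maximalIdeal (↥O) := by
      apply Ideal.Quotient.eq_zero_iff_mem.mp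
      show IsLocalRing.residue (↥O) _ = 0
      rw [map_sub, sub_eq_zero]
      exact ha
    have h0 : (⟨sp a, hc a⟩ - ⟨x, hx⟩ : ↥O) ∈ RingHom.ker ρ' := hk.symm ▸ hmem
    rw [RingHom.mem_ker, map_sub, sub_eq_zero] at h0
    exact h0 ▸ hcm a
  refine ⟨⟨O, ρ, hρker⟩, ⟨rfl, hc, fun a => hcomp a⟩, ?_⟩
  rintro v ⟨hvO, hc', hcmp⟩
  obtain ⟨O', ρ', k'⟩ := v
  dsimp at hvO hc' hcmp
  subst hvO
  refine placedata_ext rfl ?_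
  intro x hp hq
  obtain ⟨a, ha⟩ := hφsurj (IsLocalRing.residue (↥O') ⟨x, hp⟩)
  have h1 := key ρ' k' (fun a => hcmp a) x hp a ha
  have h2 := key ρ hρker hcomp x hp a ha
  exact h1.trans h2.symm
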